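/- Let q(δ) = gᵀδ + (1/2)δᵀHδ with H symmetric, let D be positive definite, and let Δ > 0. If δ* minimizes q subject to ‖Dδ‖ ≤ Δ, then there exists γ* ≥ 0 such that (H + γ* D Dᵀ) δ* = −g, H + γ* D Dᵀ is positive semidefinite, and γ*·(‖Dδ*‖ − Δ) = 0. -/

import Mathlib

open scoped Matrix
open Matrix

/-- Euclidean norm of a vector in `Fin n → ℝ`. -/
noncomputable def enorm {n : ℕ} (v : Fin n → ℝ) : ℝ := Real.sqrt (v ⬝ᵥ v)

/-- If `0 ≤ C + s*X + s^2*Y` for all small positive `s`, then `0 ≤ C`. -/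
lemma tr_limit_nonneg (C X Y : ℝ)
    (h : ∀ s : ℝ, 0 < s → s ≤ 1 → 0 ≤ C + s * X + s ^ 2 * Y) : 0 ≤ C := by
  by_contra hC
  push_neg at hC
  have hden : (0:ℝ) < 2 * (|X| + |Y|) + 1 := by positivity
  have h1 : 0 < -C / (2 * (|X| + |Y|) + 1) := div_pos (by linarith) hden
  set s : ℝ := min 1 (-C / (2 * (|X| + |Y|) + 1)) with hs
  have hs0 : 0 < s := lt_min one_pos h1
  have hs1 : s ≤ 1 := min_le_left _ _
  have hs2 : s ≤ -C / (2 * (|X| + |Y|) + 1) := min_le_right _ _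
  have hs3 : s * (2 * (|X| + |Y|) + 1) ≤ -C := (le_div_iff₀ hden).mp hs2
  have := h s hs0 hs1
  nlinarith [le_abs_self X, neg_abs_le X, le_abs_self Y, neg_abs_le Y,
    abs_nonneg X, abs_nonneg Y, mul_pos hs0 hs0,
    mul_le_mul_of_nonneg_left hs1 hs0.le]

/-- If `0 ≤ t*A + t^2*B` for all `t ∈ (0, ε]` with `ε > 0`, then `0 ≤ A`. -/
lemma tr_slope_nonneg (A B ε : ℝ) (hε : 0 < ε)
    (h : ∀ t : ℝ, 0 < t → t ≤ ε → 0 ≤ t * A + t ^ 2 * B) : 0 ≤ A := by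
  apply tr_limit_nonneg A (ε * B) 0
  intro s hs0 hs1
  have ht0 : 0 < ε * s := by positivity
  have := h (ε * s) ht0 (by nlinarith)
  have h2 : 0 ≤ (ε * s) * (A + s * (ε * B)) := by nlinarith
  have h3 : 0 ≤ A + s * (ε * B) := nonneg_of_mul_nonneg_right h2 ht0
  nlinarith

set_option maxHeartbeats 2000000 in
theorem trust_region_necessary {n : ℕ}
    (g : Fin n → ℝ) (H D : Matrix (Fin n) (Fin n) ℝ)
    (hH : H.IsSymm) (hD : D.PosDef) (Δ : ℝ) (hΔ : 0 < Δ)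
    (q : (Fin n → ℝ) → ℝ)
    (hq : ∀ δ, q δ = g ⬝ᵥ δ + (1 / 2) * (δ ⬝ᵥ H.mulVec δ))
    (δstar : Fin n → ℝ)
    (hfeas : _root_.enorm (D.mulVec δstar) ≤ Δ)
    (hmin : ∀ δ : Fin n → ℝ, _root_.enorm (D.mulVec δ) ≤ Δ → q δstar ≤ q δ) :
    ∃ γstar : ℝ, 0 ≤ γstar ∧
      (H + γstar • (D * Dᵀ)).mulVec δstar = -g ∧
      (H + γstar • (D * Dᵀ)).PosSemidef ∧
      γstar * (_root_.enorm (D.mulVec δstar) - Δ) = 0 := by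
  have hDt : Dᵀ = D := hD.isHermitian.eq
  rw [hDt]
  have hdotnn : ∀ v : Fin n → ℝ, 0 ≤ v ⬝ᵥ v := fun v =>
    Finset.sum_nonneg fun i _ => mul_self_nonneg _
  have hsymH : ∀ x y : Fin n → ℝ, x ⬝ᵥ H.mulVec y = y ⬝ᵥ H.mulVec x := by
    intro x y
    rw [Matrix.dotProduct_mulVec, ← Matrix.mulVec_transpose, hH.eq, dotProduct_comm]
  have hqexp : ∀ (δ w : Fin n → ℝ) (t : ℝ),
      q (δ + t • w) = q δ + t * ((g + H.mulVec δ) ⬝ᵥ w)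
        + t ^ 2 * ((w ⬝ᵥ H.mulVec w) / 2) := by
    intro δ w t
    have h1 : δ ⬝ᵥ H.mulVec w = w ⬝ᵥ H.mulVec δ := hsymH δ w
    have h2 : (H.mulVec δ) ⬝ᵥ w = w ⬝ᵥ H.mulVec δ := dotProduct_comm _ _
    simp only [hq, Matrix.mulVec_add, Matrix.mulVec_smul, dotProduct_add,
      add_dotProduct, dotProduct_smul, smul_dotProduct, smul_eq_mul,
      Matrix.smul_mulVec]
    rw [h1, h2]
    ring
  have hnexp : ∀ (δ w : Fin n → ℝ) (t : ℝ),
      (D.mulVec (δ + t • w)) ⬝ᵥ (D.mulVec (δ + t • w)) =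
        (D.mulVec δ) ⬝ᵥ (D.mulVec δ) + 2 * t * ((D.mulVec δ) ⬝ᵥ (D.mulVec w))
          + t ^ 2 * ((D.mulVec w) ⬝ᵥ (D.mulVec w)) := by
    intro δ w t
    have h1 : (D.mulVec w) ⬝ᵥ (D.mulVec δ) = (D.mulVec δ) ⬝ᵥ (D.mulVec w) :=
      dotProduct_comm _ _
    simp only [Matrix.mulVec_add, Matrix.mulVec_smul, dotProduct_add,
      add_dotProduct, dotProduct_smul, smul_dotProduct, smul_eq_mul]
    rw [h1]
    ring
  have hfeas_iff : ∀ v : Fin n → ℝ, _root_.enorm v ≤ Δ ↔ v ⬝ᵥ v ≤ Δ ^ 2 := by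
    intro v
    unfold _root_.enorm
    constructor
    · intro h
      nlinarith [Real.sq_sqrt (hdotnn v), Real.sqrt_nonneg (v ⬝ᵥ v)]
    · intro h
      rw [show Δ = Real.sqrt (Δ ^ 2) from (Real.sqrt_sq hΔ.le).symm]
      exact Real.sqrt_le_sqrt h
  set a : Fin n → ℝ := g + H.mulVec δstar with ha
  have hmin' : ∀ (w : Fin n → ℝ) (t : ℝ),
      (D.mulVec δstar) ⬝ᵥ (D.mulVec δstar) + 2 * t * ((D.mulVec δstar) ⬝ᵥ (D.mulVec w))
          + t ^ 2 * ((D.mulVec w) ⬝ᵥ (D.mulVec w)) ≤ Δ ^ 2 →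
      0 ≤ t * (a ⬝ᵥ w) + t ^ 2 * ((w ⬝ᵥ H.mulVec w) / 2) := by
    intro w t hfe
    have hf : _root_.enorm (D.mulVec (δstar + t • w)) ≤ Δ := by
      rw [hfeas_iff, hnexp]
      exact hfe
    have := hmin (δstar + t • w) hf
    rw [hqexp] at this
    linarith
  -- abbreviations
  set c0 : ℝ := (D.mulVec δstar) ⬝ᵥ (D.mulVec δstar) with hc0def
  -- Hermitian-ness of the shifted matrix
  have hherm : ∀ γ : ℝ, (H + γ • (D * D)).IsHermitian := by
    intro γ
    rw [Matrix.IsHermitian, Matrix.conjTranspose_eq_transpose_of_trivial]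
    rw [Matrix.transpose_add, Matrix.transpose_smul, Matrix.transpose_mul, hDt, hH.eq]
  -- quadratic form of D*D
  have hDD : ∀ w : Fin n → ℝ, w ⬝ᵥ (D * D).mulVec w = (D.mulVec w) ⬝ᵥ (D.mulVec w) := by
    intro w
    rw [← Matrix.mulVec_mulVec, Matrix.dotProduct_mulVec, ← Matrix.mulVec_transpose, hDt]
  rcases lt_or_eq_of_le hfeas with hlt | heqn
  · -- interior case
    have hc0 : c0 < Δ ^ 2 := by
      have h1 := Real.sq_sqrt (hdotnn (D.mulVec δstar))
      have h2 := Real.sqrt_nonneg ((D.mulVec δstar) ⬝ᵥ (D.mulVec δstar))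
      unfold _root_.enorm at hlt
      nlinarith
    have hstep : ∀ w : Fin n → ℝ, ∃ ε : ℝ, 0 < ε ∧ ∀ t : ℝ, 0 < t → t ≤ ε →
        0 ≤ t * (a ⬝ᵥ w) + t ^ 2 * ((w ⬝ᵥ H.mulVec w) / 2) := by
      intro w
      set c1 : ℝ := (D.mulVec δstar) ⬝ᵥ (D.mulVec w) with hc1def
      set c2 : ℝ := (D.mulVec w) ⬝ᵥ (D.mulVec w) with hc2def
      have hc2 : 0 ≤ c2 := hdotnn _
      have hden : (0:ℝ) < 2 * |c1| + c2 + 1 := by positivity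
      refine ⟨min 1 ((Δ ^ 2 - c0) / (2 * |c1| + c2 + 1)), lt_min one_pos (div_pos (by linarith) hden), ?_⟩
      intro t ht0 htε
      have ht1 : t ≤ 1 := le_trans htε (min_le_left _ _)
      have ht2 : t * (2 * |c1| + c2 + 1) ≤ Δ ^ 2 - c0 :=
        (le_div_iff₀ hden).mp (le_trans htε (min_le_right _ _))
      apply hmin' w t
      nlinarith [le_abs_self c1, neg_abs_le c1, mul_le_mul_of_nonneg_left ht1 (mul_nonneg ht0.le hc2)]
    have hAnn : ∀ w : Fin n → ℝ, 0 ≤ a ⬝ᵥ w := by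
      intro w
      obtain ⟨ε, hε, h⟩ := hstep w
      exact tr_slope_nonneg _ _ ε hε h
    have ha0 : a = 0 := by
      have h1 : a ⬝ᵥ a ≤ 0 := by
        have := hAnn (-a)
        rwa [dotProduct_neg, neg_nonneg] at this
      exact dotProduct_self_eq_zero.mp (le_antisymm h1 (hdotnn a))
    have hHpsd : ∀ w : Fin n → ℝ, 0 ≤ w ⬝ᵥ H.mulVec w := by
      intro w
      obtain ⟨ε, hε, h⟩ := hstep w
      have := h ε hε le_rfl
      rw [ha0] at this
      simp only [zero_dotProduct, mul_zero, zero_add] at this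
      nlinarith [mul_pos hε hε]
    refine ⟨0, le_rfl, ?_, ?_, by ring⟩
    · have : H.mulVec δstar = -g := by
        have := ha0
        rw [ha] at this
        exact (neg_eq_of_add_eq_zero_right this).symm
      simp [this]
    · refine Matrix.posSemidef_iff_dotProduct_mulVec.mpr ⟨by simpa using hherm 0, fun x => ?_⟩
      simpa using hHpsd x
  · -- boundary case
    have hc0 : c0 = Δ ^ 2 := by
      have h1 := Real.sq_sqrt (hdotnn (D.mulVec δstar))
      unfold _root_.enorm at heqn
      rw [heqn] at h1
      exact h1.symm
    set u : Fin n → ℝ := D.mulVec (D.mulVec δstar) with hu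
    have hudot : ∀ w : Fin n → ℝ, (D.mulVec δstar) ⬝ᵥ (D.mulVec w) = u ⬝ᵥ w := by
      intro w
      rw [Matrix.dotProduct_mulVec, ← Matrix.mulVec_transpose, hDt]
    have huδ : u ⬝ᵥ δstar = Δ ^ 2 := by rw [← hudot, ← hc0def]; exact hc0
    have hune : u ≠ 0 := by
      intro h
      rw [h, zero_dotProduct] at huδ
      nlinarith
    have huu : 0 < u ⬝ᵥ u :=
      lt_of_le_of_ne (hdotnn u) fun h => hune (dotProduct_self_eq_zero.mp h.symm)
    -- Step 1: first order condition on strict descent directions of the constraint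
    have step1 : ∀ w : Fin n → ℝ, u ⬝ᵥ w < 0 → 0 ≤ a ⬝ᵥ w := by
      intro w hw
      set c2 : ℝ := (D.mulVec w) ⬝ᵥ (D.mulVec w) with hc2def
      have hc2 : 0 ≤ c2 := hdotnn _
      have hden : (0:ℝ) < c2 + 1 := by positivity
      have hε : 0 < -(u ⬝ᵥ w) / (c2 + 1) := div_pos (by linarith) hden
      apply tr_slope_nonneg _ _ _ hε
      intro t ht0 htε
      have ht2 : t * (c2 + 1) ≤ -(u ⬝ᵥ w) := (le_div_iff₀ hden).mp htε
      apply hmin' w t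
      rw [hudot, hc0]
      nlinarith [mul_pos ht0 (neg_pos.mpr hw)]
    -- Step 2: extend to the closed halfspace
    have step2 : ∀ w : Fin n → ℝ, u ⬝ᵥ w ≤ 0 → 0 ≤ a ⬝ᵥ w := by
      intro w hw
      apply tr_limit_nonneg (a ⬝ᵥ w) (-(a ⬝ᵥ u)) 0
      intro s hs0 _
      have h1 : u ⬝ᵥ (w - s • u) < 0 := by
        rw [dotProduct_sub, dotProduct_smul, smul_eq_mul]
        nlinarith
      have := step1 _ h1
      rw [dotProduct_sub, dotProduct_smul, smul_eq_mul] at this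
      nlinarith
    have horth : ∀ w : Fin n → ℝ, u ⬝ᵥ w = 0 → a ⬝ᵥ w = 0 := by
      intro w hw
      have h1 := step2 w hw.le
      have h2 := step2 (-w) (by rw [dotProduct_neg, hw, neg_zero])
      rw [dotProduct_neg, neg_nonneg] at h2
      linarith
    set c : ℝ := (a ⬝ᵥ u) / (u ⬝ᵥ u) with hc
    have hau : u ⬝ᵥ a = a ⬝ᵥ u := dotProduct_comm _ _
    have h0 : u ⬝ᵥ (a - c • u) = 0 := by
      rw [dotProduct_sub, dotProduct_smul, smul_eq_mul, hau, hc]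
      field_simp
      ring
    have h1 : a ⬝ᵥ (a - c • u) = 0 := horth _ h0
    have h2 : (a - c • u) ⬝ᵥ (a - c • u) = 0 := by
      rw [sub_dotProduct, smul_dotProduct, smul_eq_mul, h1, h0]
      ring
    have hac : a = c • u := sub_eq_zero.mp (dotProduct_self_eq_zero.mp h2)
    have hcle : c ≤ 0 := by
      have h3 := step2 (-u) (by rw [dotProduct_neg]; linarith)
      rw [dotProduct_neg, neg_nonneg, hac, smul_dotProduct, smul_eq_mul] at h3
      nlinarith
    -- quadratic form nonnegativity for H - c • (D*D)
    have hquad : ∀ w : Fin n → ℝ,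
        0 ≤ w ⬝ᵥ H.mulVec w - c * ((D.mulVec w) ⬝ᵥ (D.mulVec w)) := by
      -- first, on directions not orthogonal to u
      have hcase1 : ∀ w : Fin n → ℝ, u ⬝ᵥ w ≠ 0 →
          0 ≤ w ⬝ᵥ H.mulVec w - c * ((D.mulVec w) ⬝ᵥ (D.mulVec w)) := by
        intro w hK
        set K : ℝ := u ⬝ᵥ w with hKdef
        set P : ℝ := (D.mulVec w) ⬝ᵥ (D.mulVec w) with hPdef
        have hP : 0 < P := by
          rcases lt_or_eq_of_le (hdotnn (D.mulVec w)) with h | h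
          · exact h
          · exfalso
            apply hK
            have hDw : D.mulVec w = 0 := dotProduct_self_eq_zero.mp h.symm
            rw [hKdef, ← hudot, hDw, dotProduct_zero]
        set t : ℝ := -2 * K / P with htdef
        have htP : t * P = -2 * K := by
          rw [htdef]; field_simp
        have ht0 : t ≠ 0 := by
          intro h
          rw [h, zero_mul] at htP
          apply hK
          linarith
        have hfe : c0 + 2 * t * (u ⬝ᵥ w) + t ^ 2 * P ≤ Δ ^ 2 := by
          have h2 : t ^ 2 * P = t * (t * P) := by ring
          rw [h2, htP, hc0, ← hKdef]
          nlinarith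
        have h := hmin' w t (by rw [hudot]; exact hfe)
        have hA : a ⬝ᵥ w = c * K := by
          rw [hac, smul_dotProduct, smul_eq_mul, hKdef]
        rw [hA] at h
        have h4 : t * (c * K) = -(c * (t ^ 2 * P)) / 2 := by
          have h3 : t ^ 2 * P = t * (t * P) := by ring
          rw [h3, htP]; ring
        rw [h4] at h
        have ht2 : 0 < t ^ 2 := by positivity
        nlinarith
      intro w
      by_cases hK : u ⬝ᵥ w = 0
      · -- perturb towards u
        apply tr_limit_nonneg _
          (2 * (w ⬝ᵥ H.mulVec u - c * ((D.mulVec w) ⬝ᵥ (D.mulVec u))))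
          (u ⬝ᵥ H.mulVec u - c * ((D.mulVec u) ⬝ᵥ (D.mulVec u)))
        intro s hs0 _
        have hne : u ⬝ᵥ (w + s • u) ≠ 0 := by
          rw [dotProduct_add, dotProduct_smul, smul_eq_mul, hK, zero_add]
          positivity
        have h := hcase1 _ hne
        have hDcomm : (D.mulVec u) ⬝ᵥ (D.mulVec w) = (D.mulVec w) ⬝ᵥ (D.mulVec u) :=
          dotProduct_comm _ _
        have hHuw : u ⬝ᵥ H.mulVec w = w ⬝ᵥ H.mulVec u := hsymH u w
        have hexp : (w + s • u) ⬝ᵥ H.mulVec (w + s • u)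
            - c * ((D.mulVec (w + s • u)) ⬝ᵥ (D.mulVec (w + s • u)))
            = (w ⬝ᵥ H.mulVec w - c * ((D.mulVec w) ⬝ᵥ (D.mulVec w)))
              + s * (2 * (w ⬝ᵥ H.mulVec u - c * ((D.mulVec w) ⬝ᵥ (D.mulVec u))))
              + s ^ 2 * (u ⬝ᵥ H.mulVec u - c * ((D.mulVec u) ⬝ᵥ (D.mulVec u))) := by
          simp only [Matrix.mulVec_add, Matrix.mulVec_smul, dotProduct_add,
            add_dotProduct, dotProduct_smul, smul_dotProduct, smul_eq_mul]
          rw [hHuw, hDcomm]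
          ring
        rw [hexp] at h
        exact h
      · exact hcase1 w hK
    refine ⟨-c, by linarith, ?_, ?_, by rw [heqn]; ring⟩
    · have hHδ : H.mulVec δstar = c • u - g := by
        have : g + H.mulVec δstar = c • u := by rw [← ha, hac]
        linear_combination (norm := module) this
      rw [Matrix.add_mulVec, Matrix.smul_mulVec]
      rw [hHδ]
      rw [hu]
      rw [Matrix.mulVec_mulVec]
      module
    · refine Matrix.posSemidef_iff_dotProduct_mulVec.mpr ⟨hherm (-c), fun x => ?_⟩
      have h := hquad x
      have h2 : x ⬝ᵥ (H + (-c) • (D * D)).mulVec x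
          = x ⬝ᵥ H.mulVec x - c * ((D.mulVec x) ⬝ᵥ (D.mulVec x)) := by
        rw [Matrix.add_mulVec, dotProduct_add, Matrix.smul_mulVec,
          dotProduct_smul, smul_eq_mul, hDD]
        ring
      show 0 ≤ star x ⬝ᵥ (H + (-c) • (D * D)).mulVec x
      rw [show star x = x from rfl, h2]
      linarith
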